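/- Let 𝒳 be a nonempty finite set, let P1, P2 be full-support probability distributions on 𝒳 and let a > 0. Then lim_{t→0⁺} GJS( t·P1 + (1−t)·P2, P2, a ) / t² = ( a / (2·(a+1)) ) · χ₂(P1‖P2), where χ₂(P1‖P2) = ∑_{x∈𝒳} (P1(x)−P2(x))²/P2(x). -/

import Mathlib

section Aux
open Filter Set Topology

lemma base_lim : Tendsto (fun v : ℝ => ((1+v)*Real.log (1+v) - v)/v^2)
    (𝓝[≠] (0:ℝ)) (𝓝 (1/2)) := by
  have hmem : Set.Ioo (-1:ℝ) 1 ∈ 𝓝[≠] (0:ℝ) :=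
    nhdsWithin_le_nhds (Ioo_mem_nhds (by norm_num) one_pos)
  have hlog : HasDerivAt (fun v : ℝ => Real.log (1+v)) 1 0 := by
    have h1 : HasDerivAt (fun v : ℝ => 1+v) 1 0 := (hasDerivAt_id 0).const_add 1
    have := (Real.hasDerivAt_log (by norm_num : (1:ℝ)+0 ≠ 0)).comp 0 h1
    simpa [Function.comp_def] using this
  apply HasDerivAt.lhopital_zero_nhdsNE (f' := fun v => Real.log (1+v)) (g' := fun v => 2*v)
  · filter_upwards [hmem] with v hv
    have h1v : (0:ℝ) < 1 + v := by linarith [hv.1]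
    have h1 : HasDerivAt (fun v : ℝ => 1+v) 1 v := (hasDerivAt_id v).const_add 1
    have hl : HasDerivAt (fun v : ℝ => Real.log (1+v)) ((1+v)⁻¹) v := by
      simpa [Function.comp_def] using (Real.hasDerivAt_log h1v.ne').comp v h1
    have := (h1.mul hl).sub (hasDerivAt_id v)
    have e : 1 * Real.log (1 + v) + (1 + v) * (1 + v)⁻¹ - 1 = Real.log (1 + v) := by
      rw [mul_inv_cancel₀ h1v.ne']; ring
    rw [e] at this
    exact this
  · filter_upwards with v
    simpa using (hasDerivAt_pow 2 v)
  · filter_upwards [self_mem_nhdsWithin] with v hv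
    simp only [mem_compl_iff, mem_singleton_iff] at hv
    exact mul_ne_zero two_ne_zero hv
  · have : ContinuousAt (fun v : ℝ => (1+v)*Real.log (1+v) - v) 0 := by
      have : ContinuousAt (fun v : ℝ => Real.log (1+v)) 0 :=
        (Real.continuousAt_log (by norm_num)).comp (by fun_prop)
      fun_prop
    have h := this.tendsto.mono_left (nhdsWithin_le_nhds (s := {(0:ℝ)}ᶜ))
    simpa using h
  · have : Tendsto (fun v : ℝ => v^2) (𝓝 0) (𝓝 0) := by
      have := ((continuous_pow 2).continuousAt (x := (0:ℝ))).tendsto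
      simpa using this
    exact this.mono_left nhdsWithin_le_nhds
  · have hslope := hasDerivAt_iff_tendsto_slope.mp hlog
    have h2 : Tendsto (fun v : ℝ => Real.log (1+v)/v/2) (𝓝[≠] 0) (𝓝 (1/2)) := by
      apply Tendsto.div_const
      refine hslope.congr' ?_
      filter_upwards [self_mem_nhdsWithin] with v hv
      simp [slope_def_field, div_eq_div_iff]
    refine h2.congr ?_
    intro v
    rw [div_div]
    ring_nf

noncomputable def Hfun (p u : ℝ) : ℝ := (p+u)*Real.log ((p+u)/p) - u

lemma basep_lim {p : ℝ} (hp : 0 < p) :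
    Tendsto (fun u : ℝ => Hfun p u / u^2) (𝓝[≠] (0:ℝ)) (𝓝 (1/(2*p))) := by
  have hcomp : Tendsto (fun u : ℝ => u/p) (𝓝[≠] (0:ℝ)) (𝓝[≠] (0:ℝ)) := by
    rw [tendsto_nhdsWithin_iff]
    constructor
    · have : Tendsto (fun u : ℝ => u/p) (𝓝 0) (𝓝 (0/p)) :=
        (tendsto_id.div_const p)
      simpa using this.mono_left (nhdsWithin_le_nhds (s := {(0:ℝ)}ᶜ))
    · filter_upwards [self_mem_nhdsWithin] with u hu
      simp only [mem_compl_iff, mem_singleton_iff] at hu ⊢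
      exact div_ne_zero hu hp.ne'
  have h := (base_lim.comp hcomp).div_const p
  have heq : (1:ℝ)/2/p = 1/(2*p) := by ring
  rw [heq] at h
  refine h.congr' ?_
  filter_upwards [self_mem_nhdsWithin] with u hu
  simp only [mem_compl_iff, mem_singleton_iff] at hu
  simp only [Function.comp_apply, Hfun]
  have h1 : 1 + u/p = (p+u)/p := by field_simp
  rw [h1]
  field_simp

lemma perx_lim {p d a : ℝ} (hp : 0 < p) (ha : 0 < a) :
    Tendsto (fun t : ℝ =>
        (a * Hfun p (t*d) - (a+1) * Hfun p ((a/(a+1))*t*d)) / t^2)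
      (𝓝[>] (0:ℝ)) (𝓝 ((a/(a+1)) * d^2 / (2*p))) := by
  have ha1 : (0:ℝ) < a + 1 := by linarith
  by_cases hd : d = 0
  · subst hd
    have : ∀ t : ℝ, (a * Hfun p (t*0) - (a+1) * Hfun p ((a/(a+1))*t*0)) / t^2 = 0 := by
      intro t
      simp [Hfun, div_self hp.ne']
    simp only [this]
    simpa using tendsto_const_nhds (α := ℝ) (x := (0:ℝ)) (f := 𝓝[>] (0:ℝ))
  · have hcd : (a/(a+1))*d ≠ 0 := mul_ne_zero (by positivity) hd
    have hmap : ∀ e : ℝ, e ≠ 0 → Tendsto (fun t : ℝ => t*e) (𝓝[>] (0:ℝ)) (𝓝[≠] (0:ℝ)) := by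
      intro e he
      rw [tendsto_nhdsWithin_iff]
      constructor
      · have : Tendsto (fun t : ℝ => t*e) (𝓝 0) (𝓝 (0*e)) := tendsto_id.mul_const e
        simpa using this.mono_left (nhdsWithin_le_nhds (s := Ioi (0:ℝ)))
      · filter_upwards [self_mem_nhdsWithin] with t ht
        simp only [mem_compl_iff, mem_singleton_iff]
        exact mul_ne_zero (ne_of_gt ht) he
    have h1 : Tendsto (fun t : ℝ => Hfun p (t*d) / (t*d)^2) (𝓝[>] (0:ℝ)) (𝓝 (1/(2*p))) :=
      (basep_lim hp).comp (hmap d hd)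
    have h2 : Tendsto (fun t : ℝ => Hfun p (t*((a/(a+1))*d)) / (t*((a/(a+1))*d))^2)
        (𝓝[>] (0:ℝ)) (𝓝 (1/(2*p))) :=
      (basep_lim hp).comp (hmap _ hcd)
    have hcomb := ((h1.const_mul (a*d^2)).sub
      (h2.const_mul ((a+1)*((a/(a+1))*d)^2)))
    have hval : a*d^2 * (1/(2*p)) - (a+1)*((a/(a+1))*d)^2 * (1/(2*p))
        = (a/(a+1)) * d^2 / (2*p) := by
      field_simp
      ring
    rw [hval] at hcomb
    refine hcomb.congr' ?_
    filter_upwards [self_mem_nhdsWithin] with t ht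
    have htne : t ≠ 0 := ne_of_gt ht
    have : (a/(a+1))*t*d = t*((a/(a+1))*d) := by ring
    rw [this]
    field_simp

lemma keyid {a p q m : ℝ} (hp : 0 < p) (hq : 0 < q) (hm : 0 < m)
    (hmdef : (a+1)*m = a*q+p) :
    a*(q*Real.log (q/m)) + p*Real.log (p/m)
      = a*(q*Real.log (q/p) - (q-p)) - (a+1)*(m*Real.log (m/p) - (m-p)) := by
  rw [Real.log_div hq.ne' hm.ne', Real.log_div hp.ne' hm.ne',
    Real.log_div hq.ne' hp.ne', Real.log_div hm.ne' hp.ne']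
  linear_combination (Real.log m - 1 - Real.log p) * hmdef

end Aux


namespace StmtNS

variable {X : Type*} [Fintype X]

/-- `P` is a probability distribution on the finite set `X`. -/
def IsProbDist (P : X → ℝ) : Prop := (∀ x, 0 ≤ P x) ∧ (∑ x, P x) = 1

/-- Kullback–Leibler divergence `D(P‖Q) = ∑_{x : P(x) > 0} P(x) log (P(x)/Q(x))`. -/
noncomputable def KL (P Q : X → ℝ) : ℝ :=
  ∑ x, if 0 < P x then P x * Real.log (P x / Q x) else 0

/-- Generalized Jensen–Shannon divergence. -/
noncomputable def GJS (Q Qt : X → ℝ) (a : ℝ) : ℝ :=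
  a * KL Q (fun x => (a * Q x + Qt x) / (a + 1)) +
    KL Qt (fun x => (a * Q x + Qt x) / (a + 1))

/-- Chi-square distance `χ₂(P1‖P2) = ∑_x (P1(x)−P2(x))²/P2(x)`. -/
noncomputable def chiSq (P1 P2 : X → ℝ) : ℝ := ∑ x, (P1 x - P2 x) ^ 2 / P2 x

open Filter Set Topology

/-- `lim_{t→0⁺} GJS(t·P1+(1−t)·P2, P2, a)/t² = (a/(2(a+1)))·χ₂(P1‖P2)`. -/
theorem gjs_mix_chiSq_limit [Nonempty X]
    (P1 P2 : X → ℝ) (hP1 : IsProbDist P1) (hP2 : IsProbDist P2)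
    (hP1pos : ∀ x, 0 < P1 x) (hP2pos : ∀ x, 0 < P2 x)
    {a : ℝ} (ha : 0 < a) :
    Filter.Tendsto
      (fun t : ℝ => GJS (fun x => t * P1 x + (1 - t) * P2 x) P2 a / t ^ 2)
      (nhdsWithin 0 (Set.Ioi 0))
      (nhds (a / (2 * (a + 1)) * chiSq P1 P2)) := by
  have ha1 : (0:ℝ) < a + 1 := by linarith
  have hsum : Tendsto (fun t : ℝ => ∑ x,
      (a * Hfun (P2 x) (t*(P1 x - P2 x))
        - (a+1) * Hfun (P2 x) ((a/(a+1))*t*(P1 x - P2 x))) / t^2)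
      (𝓝[>] (0:ℝ))
      (𝓝 (∑ x, (a/(a+1)) * (P1 x - P2 x)^2 / (2*(P2 x)))) :=
    tendsto_finset_sum _ (fun x _ => perx_lim (hP2pos x) ha)
  have hval : (∑ x, (a/(a+1)) * (P1 x - P2 x)^2 / (2*(P2 x)))
      = a / (2 * (a + 1)) * chiSq P1 P2 := by
    rw [chiSq, Finset.mul_sum]
    refine Finset.sum_congr rfl fun x _ => ?_
    have h2 := (hP2pos x).ne'
    field_simp
  rw [hval] at hsum
  refine hsum.congr' ?_
  filter_upwards [Ioo_mem_nhdsGT_of_mem (left_mem_Ico.2 one_pos)] with t ht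
  obtain ⟨ht0, ht1⟩ := ht
  have hQpos : ∀ x, 0 < t * P1 x + (1 - t) * P2 x := fun x =>
    add_pos_of_pos_of_nonneg (mul_pos ht0 (hP1pos x))
      (mul_nonneg (by linarith) (hP2pos x).le)
  have hGJS : GJS (fun x => t * P1 x + (1 - t) * P2 x) P2 a
      = ∑ x, (a * ((t * P1 x + (1 - t) * P2 x) *
          Real.log ((t * P1 x + (1 - t) * P2 x) /
            ((a * (t * P1 x + (1 - t) * P2 x) + P2 x) / (a + 1))))
        + P2 x * Real.log (P2 x /
            ((a * (t * P1 x + (1 - t) * P2 x) + P2 x) / (a + 1)))) := by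
    rw [GJS, KL, KL, Finset.mul_sum, ← Finset.sum_add_distrib]
    refine Finset.sum_congr rfl fun x _ => ?_
    rw [if_pos (hQpos x), if_pos (hP2pos x)]
  rw [hGJS, Finset.sum_div]
  refine Finset.sum_congr rfl fun x _ => ?_
  have e1 : t * P1 x + (1 - t) * P2 x = P2 x + t * (P1 x - P2 x) := by ring
  have e2 : (a * (P2 x + t * (P1 x - P2 x)) + P2 x) / (a + 1)
      = P2 x + a/(a+1) * t * (P1 x - P2 x) := by
    field_simp; ring
  rw [e1, e2]
  have h1 : 0 < P2 x + t * (P1 x - P2 x) := e1 ▸ hQpos x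
  have h2 : 0 < P2 x + a/(a+1) * t * (P1 x - P2 x) := by
    rw [← e2]
    exact div_pos (add_pos (mul_pos ha h1) (hP2pos x)) ha1
  have hmdef : (a+1) * (P2 x + a/(a+1) * t * (P1 x - P2 x))
      = a * (P2 x + t * (P1 x - P2 x)) + P2 x := by
    field_simp; ring
  rw [keyid (hP2pos x) h1 h2 hmdef, Hfun, Hfun]
  congr 1
  ring


end StmtNS
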